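/- Let μ, ν be reals with 0 < ν < μ and let Δ ≥ 1 be a natural number. Then 2/ln(μ/ν) ≤ 1 / ( Δ·(1 - (ν/μ)^(1/(2Δ))) ) ≤ 2/ln(μ/ν) + 1/Δ. -/
import Mathlib


open Real

theorem stmt_6 (μ ν : ℝ) (Δ : ℕ)
    (hν0 : 0 < ν) (hνμ : ν < μ) (hΔ : 1 ≤ Δ) :
    2 / Real.log (μ / ν) ≤ 1 / ((Δ : ℝ) * (1 - (ν / μ) ^ (1 / (2 * (Δ : ℝ))))) ∧
    1 / ((Δ : ℝ) * (1 - (ν / μ) ^ (1 / (2 * (Δ : ℝ)))))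
      ≤ 2 / Real.log (μ / ν) + 1 / (Δ : ℝ) := by
  have hμ : 0 < μ := hν0.trans hνμ
  have hd : (0:ℝ) < (Δ : ℝ) := by exact_mod_cast Nat.lt_of_lt_of_le Nat.zero_lt_one hΔ
  set d := (Δ:ℝ) with hdd
  have hr : 0 < ν/μ := div_pos hν0 hμ
  have hL : 0 < Real.log (μ/ν) := Real.log_pos (by rw [lt_div_iff₀ hν0]; linarith)
  set L := Real.log (μ/ν) with hLdef
  have hlog : Real.log (ν/μ) = -L := by
    rw [hLdef, ← Real.log_inv]; congr 1; field_simp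
  set u := L / (2*d) with hu
  have hu0 : 0 < u := div_pos hL (by positivity)
  have hx : (ν/μ) ^ (1/(2*d)) = Real.exp (-u) := by
    rw [Real.rpow_def_of_pos hr, hlog, hu]; congr 1; ring
  rw [hx]
  have he1 : 1 - u ≤ Real.exp (-u) := by
    have := Real.add_one_le_exp (-u); linarith
  have he2 : 1 + u ≤ Real.exp u := by have := Real.add_one_le_exp u; linarith
  have hex : Real.exp (-u) < 1 := by
    rw [Real.exp_lt_one_iff]; linarith
  have hpos : 0 < d * (1 - Real.exp (-u)) := by
    have := Real.exp_pos (-u); nlinarith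
  have hLu : L = 2*d*u := by rw [hu]; field_simp
  constructor
  · rw [div_le_div_iff₀ hL hpos]
    nlinarith
  · have h2 : 2 / L + 1/d = (2*d + L)/(L*d) := by field_simp
    rw [h2, div_le_div_iff₀ hpos (by positivity)]
    have h3 : (1+u) * Real.exp (-u) ≤ 1 := by
      have h4 : (1+u) * Real.exp (-u) ≤ Real.exp u * Real.exp (-u) :=
        mul_le_mul_of_nonneg_right he2 (Real.exp_pos _).le
      rwa [← Real.exp_add, add_neg_cancel, Real.exp_zero] at h4
    nlinarith [Real.exp_pos (-u), mul_le_mul_of_nonneg_left h3 (by positivity : (0:ℝ) ≤ 2*d*d)]
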